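/- If X is an initially λ-compact topological space and 2^μ ≤ λ, then X is D-compact for every ultrafilter D over any set of cardinality at most μ. -/

import Mathlib

open Cardinal Set

universe u v

/-- `x` is a `D`-limit point of the family of sets `O`. -/
def DLimitSets {X : Type u} {I : Type v} [TopologicalSpace X]
    (D : Ultrafilter I) (O : I → Set X) (x : X) : Prop :=
  ∀ U ∈ nhds x, {i | (U ∩ O i).Nonempty} ∈ D

/-- `X` is `D`-pseudocompact. -/
def DPseudocompact (X : Type u) {I : Type v} [TopologicalSpace X]
    (D : Ultrafilter I) : Prop :=
  ∀ O : I → Set X, (∀ i, IsOpen (O i)) → (∀ i, (O i).Nonempty) →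
    ∃ x : X, DLimitSets D O x

/-- Every open cover of cardinality at most `lam` has a finite subfamily with dense union. -/
def WeaklyInitiallyCompact (X : Type u) [TopologicalSpace X] (lam : Cardinal.{u}) : Prop :=
  ∀ 𝒰 : Set (Set X), (∀ U ∈ 𝒰, IsOpen U) → ⋃₀ 𝒰 = Set.univ →
    Cardinal.mk 𝒰 ≤ lam →
    ∃ t : Finset (Set X), ↑t ⊆ 𝒰 ∧ Dense (⋃₀ (t : Set (Set X)))

/-- A regular ultrafilter over `I` (regular of degree `|I|`): there is an `I`-indexed
family of members of `D` every infinite subfamily of which has empty intersection. -/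
def RegularUltrafilter {I : Type v} (D : Ultrafilter I) : Prop :=
  ∃ Z : I → Set I, (∀ i, Z i ∈ D) ∧
    ∀ S : Set I, S.Infinite → ⋂ i ∈ S, Z i = ∅

/-- Every open cover of cardinality at most `lam` has a finite subcover. -/
def InitiallyCompact (X : Type u) [TopologicalSpace X] (lam : Cardinal.{u}) : Prop :=
  ∀ 𝒰 : Set (Set X), (∀ U ∈ 𝒰, IsOpen U) → ⋃₀ 𝒰 = Set.univ →
    Cardinal.mk 𝒰 ≤ lam →
    ∃ t : Finset (Set X), ↑t ⊆ 𝒰 ∧ ⋃₀ (t : Set (Set X)) = Set.univ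

/-- `X` is `D`-compact: every `I`-indexed sequence of points has a `D`-limit. -/
def DCompact (X : Type u) {I : Type v} [TopologicalSpace X] (D : Ultrafilter I) : Prop :=
  ∀ f : I → X, ∃ x : X, ∀ U ∈ nhds x, {i | f i ∈ U} ∈ D

theorem initiallyCompact_implies_dCompact
    {X : Type u} [TopologicalSpace X] (lam mu : Cardinal.{u})
    (hlam : Cardinal.aleph0 ≤ lam) (hmu : Cardinal.aleph0 ≤ mu)
    (h2 : 2 ^ mu ≤ lam) (hX : InitiallyCompact X lam)
    (I : Type u) (hI : Cardinal.mk I ≤ mu) (D : Ultrafilter I) :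
    DCompact X D := by
  intro f
  by_contra h
  push_neg at h
  set 𝒰 : Set (Set X) := (fun A : Set I => (closure (f '' A))ᶜ) '' {A | A ∈ D} with h𝒰
  have hopen : ∀ U ∈ 𝒰, IsOpen U := by
    rintro U ⟨A, -, rfl⟩
    exact isClosed_closure.isOpen_compl
  have hcover : ⋃₀ 𝒰 = Set.univ := by
    ext x
    simp only [Set.mem_sUnion, Set.mem_univ, iff_true]
    obtain ⟨U, hU, hUD⟩ := h x
    obtain ⟨V, hVU, hVopen, hxV⟩ := mem_nhds_iff.mp hU
    have hVD : {i | f i ∈ V} ∉ D := fun hm => hUD (D.sets_of_superset hm (fun i hi => hVU hi))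
    have hAD : {i | f i ∉ V} ∈ D := by
      have := (Ultrafilter.compl_mem_iff_notMem (s := {i | f i ∈ V})).mpr hVD
      simpa [Set.compl_setOf] using this
    refine ⟨(closure (f '' {i | f i ∉ V}))ᶜ, ⟨_, hAD, rfl⟩, ?_⟩
    intro hx
    obtain ⟨y, hyV, hy⟩ := mem_closure_iff.mp hx V hVopen hxV
    obtain ⟨i, hi, rfl⟩ := hy
    exact hi hyV
  have hcard : Cardinal.mk 𝒰 ≤ lam := by
    calc Cardinal.mk 𝒰 ≤ Cardinal.mk {A : Set I | A ∈ D} := Cardinal.mk_image_le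
      _ ≤ Cardinal.mk (Set I) := Cardinal.mk_subtype_le _
      _ = 2 ^ Cardinal.mk I := Cardinal.mk_set
      _ ≤ 2 ^ mu := by
          exact Cardinal.power_le_power_left (by norm_num) hI
      _ ≤ lam := h2
  obtain ⟨t, ht𝒰, htcov⟩ := hX 𝒰 hopen hcover hcard
  have hmem : ∀ U ∈ t, {i | f i ∉ U} ∈ D := by
    intro U hU
    obtain ⟨A, hA, rfl⟩ := ht𝒰 hU
    refine D.sets_of_superset hA fun i hi => ?_
    simp only [Set.mem_setOf_eq, Set.mem_compl_iff, not_not]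
    exact subset_closure ⟨i, hi, rfl⟩
  have hB : (⋂ U ∈ t, {i | f i ∉ U}) ∈ D := (Filter.biInter_finset_mem t).mpr hmem
  obtain ⟨i, hi⟩ := D.nonempty_of_mem hB
  have : f i ∈ ⋃₀ (t : Set (Set X)) := htcov ▸ Set.mem_univ _
  obtain ⟨U, hUt, hfiU⟩ := this
  simp only [Set.mem_iInter] at hi
  exact hi U hUt hfiU
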